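/- One-step recurrence for S-DANE: let each f_i be μ-convex with μ ≥ 0 and let {f_i} have δ_s-SOD of size s with δ_s > 0; let λ > 0. Fix a subset S ⊆ {1,…,n} with |S| = s, a point v^r ∈ E, and arbitrary points x_{i,r+1} ∈ E for i ∈ S. Put x^{r+1} := (1/s)Σ_{i∈S} x_{i,r+1} and v^{r+1} := (λ v^r + μ x^{r+1} − (1/s)Σ_{i∈S} ∇f_i(x_{i,r+1}))/(λ + μ). Let x* be a minimizer of f. Then (1/λ)[f_S(x^{r+1}) − f_S(x*)] + ((1 + μ/λ)/2)‖v^{r+1} − x*‖² ≤ (1/2)‖v^r − x*‖² − ((1 − δ_s/λ)/2)(1/s)Σ_{i∈S}‖v^r − x_{i,r+1}‖² + (1/λ²)(1/s)Σ_{i∈S}‖∇F_{i,r}(x_{i,r+1})‖², where ∇F_{i,r}(x) := ∇f_i(x) + ∇f_S(v^r) − ∇f_i(v^r) + λ(x − v^r). -/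

import Mathlib

open Finset RealInnerProductSpace InnerProductSpace

set_option maxHeartbeats 1000000 in
private lemma young_aux {p a b d : ℝ} (hd : 0 < d) (hp : p ≤ a * b) :
    d * p ≤ (1/2) * a ^ 2 + (d ^ 2/2) * b ^ 2 := by
  nlinarith [sq_nonneg (a - d * b), mul_le_mul_of_nonneg_left hp hd.le]

set_option maxHeartbeats 1000000

/-- One-step recurrence for S-DANE (Lemma `thm:S-DANE-OneStepRecurrence2`). -/
theorem sdane_one_step_recurrence
    {E : Type*} [NormedAddCommGroup E] [InnerProductSpace ℝ E] [CompleteSpace E]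
    (n : ℕ) (hn : 0 < n)
    (f' : Fin n → E → ℝ) (hdiff : ∀ i, Differentiable ℝ (f' i))
    (f : E → ℝ) (hfdef : f = fun x => (1 / (n : ℝ)) * ∑ i, f' i x)
    (μ : ℝ) (hμ : 0 ≤ μ)
    (hconv : ∀ i, ∀ x y : E,
      f' i y ≥ f' i x + ⟪gradient (f' i) x, y - x⟫ + (μ / 2) * ‖x - y‖ ^ 2)
    (s : ℕ) (hs1 : 1 ≤ s) (hsn : s ≤ n)
    (δs : ℝ) (hδs : 0 < δs)
    (hSOD : ∀ S : Finset (Fin n), S.card = s → ∀ x y : E,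
      (1 / (s : ℝ)) * ∑ i ∈ S,
          ‖gradient (fun z => (1 / (s : ℝ)) * (∑ j ∈ S, f' j z) - f' i z) x
            - gradient (fun z => (1 / (s : ℝ)) * (∑ j ∈ S, f' j z) - f' i z) y‖ ^ 2
        ≤ δs ^ 2 * ‖x - y‖ ^ 2)
    (lam : ℝ) (hlam : 0 < lam)
    (S : Finset (Fin n)) (hS : S.card = s)
    (vr : E) (xi : Fin n → E)
    (xnext : E) (hxnext : xnext = (1 / (s : ℝ)) • ∑ i ∈ S, xi i)
    (vnext : E) (hvnext : vnext = (lam + μ)⁻¹ •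
      (lam • vr + μ • xnext - (1 / (s : ℝ)) • ∑ i ∈ S, gradient (f' i) (xi i)))
    (xstar : E) (hstar : ∀ z, f xstar ≤ f z) :
    (1 / lam) * ((1 / (s : ℝ)) * (∑ i ∈ S, f' i xnext)
        - (1 / (s : ℝ)) * (∑ i ∈ S, f' i xstar))
      + ((1 + μ / lam) / 2) * ‖vnext - xstar‖ ^ 2
    ≤ (1 / 2) * ‖vr - xstar‖ ^ 2
      - ((1 - δs / lam) / 2) * ((1 / (s : ℝ)) * ∑ i ∈ S, ‖vr - xi i‖ ^ 2)
      + (1 / lam ^ 2) * ((1 / (s : ℝ)) * ∑ i ∈ S,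
          ‖gradient (f' i) (xi i)
            + gradient (fun z => (1 / (s : ℝ)) * ∑ j ∈ S, f' j z) vr
            - gradient (f' i) vr + lam • (xi i - vr)‖ ^ 2) := by
  have hs0 : (0:ℝ) < (s:ℝ) := by exact_mod_cast Nat.lt_of_lt_of_le Nat.zero_lt_one hs1
  have hs0' : (s:ℝ) ≠ 0 := ne_of_gt hs0
  set s' : ℝ := (s:ℝ) with hs'
  have hκ : (0:ℝ) < lam + μ := by linarith
  have hκ' : lam + μ ≠ 0 := ne_of_gt hκ
  -- gradient computations
  have hgradH : ∀ (i : Fin n) (y : E),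
      HasGradientAt (fun z => (1 / s') * (∑ j ∈ S, f' j z) - f' i z)
        ((1 / s') • (∑ j ∈ S, gradient (f' j) y) - gradient (f' i) y) y := by
    intro i y
    rw [hasGradientAt_iff_hasFDerivAt]
    have h1 : ∀ j : Fin n, HasFDerivAt (f' j) (toDual ℝ E (gradient (f' j) y)) y :=
      fun j => ((hdiff j y).hasGradientAt).hasFDerivAt
    have h2 : HasFDerivAt (fun z => (1 / s') * (∑ j ∈ S, f' j z) - f' i z)
        ((1 / s') • (∑ j ∈ S, toDual ℝ E (gradient (f' j) y)) - toDual ℝ E (gradient (f' i) y))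
        y := ((HasFDerivAt.fun_sum (fun j _ => h1 j)).const_mul (1 / s')).sub (h1 i)
    convert h2 using 1
    · rfl
    simp [map_sub, map_smul, map_sum]
  have hgradQ : ∀ y : E,
      HasGradientAt (fun z => (1 / s') * ∑ j ∈ S, f' j z)
        ((1 / s') • (∑ j ∈ S, gradient (f' j) y)) y := by
    intro y
    rw [hasGradientAt_iff_hasFDerivAt]
    have h1 : ∀ j : Fin n, HasFDerivAt (f' j) (toDual ℝ E (gradient (f' j) y)) y :=
      fun j => ((hdiff j y).hasGradientAt).hasFDerivAt
    have h2 : HasFDerivAt (fun z => (1 / s') * ∑ j ∈ S, f' j z)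
        ((1 / s') • (∑ j ∈ S, toDual ℝ E (gradient (f' j) y))) y :=
      (HasFDerivAt.fun_sum (fun j _ => h1 j)).const_mul (1 / s')
    convert h2 using 1
    · rfl
    simp [map_smul, map_sum]
  rw [(hgradQ vr).gradient]
  -- abbreviations
  set Qv : E := (1 / s') • (∑ j ∈ S, gradient (f' j) vr) with hQv
  set Qx : E := (1 / s') • (∑ j ∈ S, gradient (f' j) xnext) with hQx
  set g : Fin n → E := fun i => gradient (f' i) (xi i) + Qv - gradient (f' i) vr + lam • (xi i - vr) with hg
  set c : Fin n → E := fun i => xstar - xi i + (lam + μ)⁻¹ • g i with hc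
  set Hv : Fin n → E := fun i => Qv - gradient (f' i) vr with hHv
  set Hx : Fin n → E := fun i => Qx - gradient (f' i) xnext with hHx
  -- basic sum identities
  have hsum_xi : ∑ i ∈ S, xi i = s' • xnext := by
    rw [hxnext, smul_smul]
    rw [mul_one_div, div_self hs0', one_smul]
  have hsum_qvr : ∑ j ∈ S, gradient (f' j) vr = s' • Qv := by
    rw [hQv, smul_smul, mul_one_div, div_self hs0', one_smul]
  have hsum_Hv : ∑ i ∈ S, Hv i = 0 := by
    rw [hHv]
    simp only [Finset.sum_sub_distrib, Finset.sum_const, hS, hsum_qvr]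
    rw [← Nat.cast_smul_eq_nsmul ℝ, sub_eq_zero, hs']
  have hsum_g : ∑ i ∈ S, g i = (∑ i ∈ S, gradient (f' i) (xi i)) + (lam * s') • (xnext - vr) := by
    rw [hg]
    simp only [Finset.sum_add_distrib, Finset.sum_sub_distrib, Finset.sum_const, hS,
      ← Finset.smul_sum, hsum_qvr, hsum_xi]
    rw [← Nat.cast_smul_eq_nsmul ℝ, ← hs']
    match_scalars <;> ring
  have hw : vnext = xnext - (lam + μ)⁻¹ • ((1 / s') • ∑ i ∈ S, g i) := by
    rw [hvnext, hsum_g]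
    match_scalars <;> field_simp <;> ring
  have hsum_p : ∑ i ∈ S, (xi i - vr) = s' • (xnext - vr) := by
    rw [Finset.sum_sub_distrib, hsum_xi, Finset.sum_const, hS,
      ← Nat.cast_smul_eq_nsmul ℝ, ← hs']
    module
  -- bias-variance identity
  have hbv : ∑ i ∈ S, ‖xi i - xnext‖ ^ 2
      = (∑ i ∈ S, ‖xi i - vr‖ ^ 2) - s' * ‖xnext - vr‖ ^ 2 := by
    have per : ∀ i ∈ S, ‖xi i - xnext‖ ^ 2
        = ‖xi i - vr‖ ^ 2 - 2 * ⟪xi i - vr, xnext - vr⟫ + ‖xnext - vr‖ ^ 2 := by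
      intro i _
      have h := norm_sub_sq_real (xi i - vr) (xnext - vr)
      have e : (xi i - vr) - (xnext - vr) = xi i - xnext := by abel
      rw [e] at h
      linarith
    rw [Finset.sum_congr rfl per, Finset.sum_add_distrib, Finset.sum_sub_distrib,
      Finset.sum_const, hS, ← Finset.mul_sum, ← sum_inner, hsum_p, real_inner_smul_left,
      real_inner_self_eq_norm_sq, nsmul_eq_mul, ← hs']
    ring
  -- Jensen for the c i
  have hsum_c : ∑ i ∈ S, c i = s' • (xstar - vnext) := by
    have e1 : ∑ i ∈ S, c i
        = s' • xstar - s' • xnext + (lam + μ)⁻¹ • ∑ i ∈ S, g i := by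
      simp only [hc, Finset.sum_add_distrib, Finset.sum_sub_distrib, Finset.sum_const, hS,
        ← Finset.smul_sum, hsum_xi, ← Nat.cast_smul_eq_nsmul ℝ (M := E), ← hs']
    rw [e1, hw]
    match_scalars <;> field_simp
  have hJ : s' * ‖xstar - vnext‖ ^ 2 ≤ ∑ i ∈ S, ‖c i‖ ^ 2 := by
    have h1 : ‖∑ i ∈ S, c i‖ ≤ ∑ i ∈ S, ‖c i‖ := norm_sum_le _ _
    have h2 : (∑ i ∈ S, ‖c i‖) ^ 2 ≤ s' * ∑ i ∈ S, ‖c i‖ ^ 2 := by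
      have := sq_sum_le_card_mul_sum_sq (s := S) (f := fun i => ‖c i‖)
      rw [hS] at this
      exact_mod_cast this
    have h3 : ‖∑ i ∈ S, c i‖ ^ 2 = s' ^ 2 * ‖xstar - vnext‖ ^ 2 := by
      rw [hsum_c, norm_smul, Real.norm_eq_abs, abs_of_pos hs0]
      ring
    nlinarith [norm_nonneg (∑ i ∈ S, c i), Finset.sum_nonneg (fun i (_ : i ∈ S) => norm_nonneg (c i))]
  -- SOD bound
  have hsod1 : ∑ i ∈ S, ‖Hx i - Hv i‖ ^ 2 ≤ s' * (δs ^ 2 * ‖xnext - vr‖ ^ 2) := by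
    have h0 := hSOD S hS xnext vr
    have e : ∀ i ∈ S,
        ‖gradient (fun z => 1 / s' * (∑ j ∈ S, f' j z) - f' i z) xnext
          - gradient (fun z => 1 / s' * (∑ j ∈ S, f' j z) - f' i z) vr‖ ^ 2
        = ‖Hx i - Hv i‖ ^ 2 := by
      intro i _
      rw [(hgradH i xnext).gradient, (hgradH i vr).gradient, hHx, hHv]
    rw [Finset.sum_congr rfl e] at h0
    calc ∑ i ∈ S, ‖Hx i - Hv i‖ ^ 2 = s' * (1 / s' * ∑ i ∈ S, ‖Hx i - Hv i‖ ^ 2) := by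
          field_simp
      _ ≤ s' * (δs ^ 2 * ‖xnext - vr‖ ^ 2) := mul_le_mul_of_nonneg_left h0 hs0.le
  have hsodb : ∑ i ∈ S, ⟪Hx i - Hv i, xi i - xnext⟫
      ≤ (δs / 2) * ∑ i ∈ S, ‖xi i - vr‖ ^ 2 := by
    have young : ∀ i ∈ S, δs * ⟪Hx i - Hv i, xi i - xnext⟫
        ≤ (1/2) * ‖Hx i - Hv i‖ ^ 2 + (δs ^ 2/2) * ‖xi i - xnext‖ ^ 2 :=
      fun i _ => young_aux hδs (real_inner_le_norm _ _)
    have hsy := Finset.sum_le_sum young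
    rw [← Finset.mul_sum] at hsy
    rw [Finset.sum_add_distrib, ← Finset.mul_sum, ← Finset.mul_sum, hbv] at hsy
    have h5 : δs * (∑ i ∈ S, ⟪Hx i - Hv i, xi i - xnext⟫)
        ≤ δs * ((δs / 2) * ∑ i ∈ S, ‖xi i - vr‖ ^ 2) := by linarith [hsod1, hsy]
    exact le_of_mul_le_mul_left h5 hδs
  -- per-index inequality
  have hPER : ∀ i ∈ S,
      ⟪Qx, xi i - xnext⟫ - ⟪Hx i - Hv i, xi i - xnext⟫ - ⟪Hv i, xstar - xnext⟫
        + (lam/2) * ‖xi i - vr‖ ^ 2 - (lam/2) * ‖xstar - vr‖ ^ 2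
        + ((lam+μ)/2) * ‖c i‖ ^ 2 - ‖g i‖ ^ 2 / (2*(lam+μ))
      ≤ f' i xstar - f' i xnext := by
    intro i _
    have hA := hconv i (xi i) xstar
    have hB := hconv i xnext (xi i)
    rw [show ‖xi i - xstar‖ = ‖xstar - xi i‖ from norm_sub_rev _ _] at hA
    have e1 : ⟪gradient (f' i) xnext, xi i - xnext⟫
        = ⟪Qx, xi i - xnext⟫ - ⟪Hx i - Hv i, xi i - xnext⟫ - ⟪Hv i, xi i - xnext⟫ := by
      simp only [hHx, hHv, inner_sub_left]; ring
    have e2 : ⟪gradient (f' i) (xi i), xstar - xi i⟫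
        = ⟪g i, xstar - xi i⟫ - ⟪Hv i, xstar - xi i⟫ - lam * ⟪xi i - vr, xstar - xi i⟫ := by
      simp only [hg, hHv, inner_sub_left, inner_add_left, real_inner_smul_left]; ring
    have e3 : ⟪Hv i, xi i - xnext⟫ + ⟪Hv i, xstar - xi i⟫ = ⟪Hv i, xstar - xnext⟫ := by
      rw [← inner_add_right]
      congr 1
      abel
    have e4 : lam * ⟪xi i - vr, xstar - xi i⟫
        = (lam/2) * ‖xstar - vr‖ ^ 2 - (lam/2) * ‖xi i - vr‖ ^ 2
          - (lam/2) * ‖xstar - xi i‖ ^ 2 := by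
      have h := norm_add_sq_real (xi i - vr) (xstar - xi i)
      have e : (xi i - vr) + (xstar - xi i) = xstar - vr := by abel
      rw [e] at h
      linear_combination (-(lam/2)) * h
    have e5 : ⟪g i, xstar - xi i⟫ + ((lam+μ)/2) * ‖xstar - xi i‖ ^ 2
        = ((lam+μ)/2) * ‖c i‖ ^ 2 - ‖g i‖ ^ 2 / (2*(lam+μ)) := by
      have h := norm_add_sq_real (xstar - xi i) ((lam+μ)⁻¹ • g i)
      have h2 : ⟪xstar - xi i, (lam+μ)⁻¹ • g i⟫ = (lam+μ)⁻¹ * ⟪xstar - xi i, g i⟫ :=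
        real_inner_smul_right _ _ _
      have h3 : ‖(lam+μ)⁻¹ • g i‖ ^ 2 = ((lam+μ)⁻¹) ^ 2 * ‖g i‖ ^ 2 := by
        rw [norm_smul, Real.norm_eq_abs, abs_of_pos (inv_pos.mpr hκ), mul_pow]
      have h4 : ⟪g i, xstar - xi i⟫ = ⟪xstar - xi i, g i⟫ := real_inner_comm _ _
      have hcc : ‖c i‖ ^ 2 = ‖xstar - xi i + (lam+μ)⁻¹ • g i‖ ^ 2 := by rw [hc]
      rw [hcc, h, h2, h3, h4]
      field_simp
      ring
    have hdrop : 0 ≤ μ / 2 * ‖xnext - xi i‖ ^ 2 :=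
      mul_nonneg (by linarith) (sq_nonneg _)
    linarith [hA, hB, e1, e2, e3, e4, e5, hdrop]
  -- assemble the summed inequality
  have sA : ∑ i ∈ S, ⟪Qx, xi i - xnext⟫ = 0 := by
    rw [← inner_sum]
    have hz : ∑ i ∈ S, (xi i - xnext) = 0 := by
      rw [Finset.sum_sub_distrib, hsum_xi, Finset.sum_const, hS,
        ← Nat.cast_smul_eq_nsmul ℝ, ← hs', sub_self]
    rw [hz, inner_zero_right]
  have sC : ∑ i ∈ S, ⟪Hv i, xstar - xnext⟫ = 0 := by
    rw [← sum_inner, hsum_Hv, inner_zero_left]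
  have hkey := Finset.sum_le_sum hPER
  have hL : ∑ i ∈ S, (⟪Qx, xi i - xnext⟫ - ⟪Hx i - Hv i, xi i - xnext⟫ - ⟪Hv i, xstar - xnext⟫
        + (lam/2) * ‖xi i - vr‖ ^ 2 - (lam/2) * ‖xstar - vr‖ ^ 2
        + ((lam+μ)/2) * ‖c i‖ ^ 2 - ‖g i‖ ^ 2 / (2*(lam+μ)))
      = - (∑ i ∈ S, ⟪Hx i - Hv i, xi i - xnext⟫)
        + (lam/2) * (∑ i ∈ S, ‖xi i - vr‖ ^ 2) - s' * ((lam/2) * ‖xstar - vr‖ ^ 2)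
        + ((lam+μ)/2) * (∑ i ∈ S, ‖c i‖ ^ 2) - (∑ i ∈ S, ‖g i‖ ^ 2) / (2*(lam+μ)) := by
    simp only [Finset.sum_sub_distrib, Finset.sum_add_distrib, ← Finset.mul_sum,
      ← Finset.sum_div, Finset.sum_const, hS, sA, sC, nsmul_eq_mul]
    rw [← hs']
    ring
  have hRL : ∑ i ∈ S, (f' i xstar - f' i xnext)
      = (∑ i ∈ S, f' i xstar) - (∑ i ∈ S, f' i xnext) := Finset.sum_sub_distrib _ _
  rw [hL, hRL] at hkey
  have hJ' := mul_le_mul_of_nonneg_left hJ (le_of_lt (half_pos hκ))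
  have KEY : (∑ i ∈ S, f' i xnext) - (∑ i ∈ S, f' i xstar)
        + (s' * (lam+μ)/2) * ‖xstar - vnext‖ ^ 2
      ≤ (s' * lam/2) * ‖xstar - vr‖ ^ 2
        - ((lam - δs)/2) * (∑ i ∈ S, ‖xi i - vr‖ ^ 2)
        + (∑ i ∈ S, ‖g i‖ ^ 2) / (2*(lam+μ)) := by
    linarith [hkey, hsodb, hJ']
  -- rewrite the goal
  have hPrev : ∑ i ∈ S, ‖vr - xi i‖ ^ 2 = ∑ i ∈ S, ‖xi i - vr‖ ^ 2 :=
    Finset.sum_congr rfl fun i _ => by rw [norm_sub_rev]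
  have hGsum : (∑ i ∈ S, ‖gradient (f' i) (xi i) + Qv - gradient (f' i) vr
        + lam • (xi i - vr)‖ ^ 2) = ∑ i ∈ S, ‖g i‖ ^ 2 :=
    Finset.sum_congr rfl fun i _ => by simp only [hg]
  rw [hPrev, hGsum, show ‖vnext - xstar‖ = ‖xstar - vnext‖ from norm_sub_rev _ _,
    show ‖vr - xstar‖ = ‖xstar - vr‖ from norm_sub_rev _ _]
  have hGG : (0:ℝ) ≤ ∑ i ∈ S, ‖g i‖ ^ 2 := Finset.sum_nonneg fun i _ => sq_nonneg _
  have e1 : (1/lam) * ((1/s') * (∑ i ∈ S, f' i xnext) - (1/s') * (∑ i ∈ S, f' i xstar))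
        + ((1 + μ/lam)/2) * ‖xstar - vnext‖ ^ 2
      = (s'*lam)⁻¹ * ((∑ i ∈ S, f' i xnext) - (∑ i ∈ S, f' i xstar)
        + (s' * (lam+μ)/2) * ‖xstar - vnext‖ ^ 2) := by
    field_simp
  have e2 : (1/2) * ‖xstar - vr‖ ^ 2
        - ((1 - δs/lam)/2) * ((1/s') * ∑ i ∈ S, ‖xi i - vr‖ ^ 2)
        + (1/lam^2) * ((1/s') * ∑ i ∈ S, ‖g i‖ ^ 2)
      = (s'*lam)⁻¹ * ((s' * lam/2) * ‖xstar - vr‖ ^ 2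
        - ((lam - δs)/2) * (∑ i ∈ S, ‖xi i - vr‖ ^ 2)
        + (1/lam) * ∑ i ∈ S, ‖g i‖ ^ 2) := by
    field_simp
  rw [e1, e2]
  have h6 : (∑ i ∈ S, ‖g i‖ ^ 2) / (2*(lam+μ)) ≤ (1/lam) * ∑ i ∈ S, ‖g i‖ ^ 2 := by
    calc (∑ i ∈ S, ‖g i‖ ^ 2) / (2*(lam+μ)) ≤ (∑ i ∈ S, ‖g i‖ ^ 2) / lam :=
          div_le_div_of_nonneg_left hGG hlam (by linarith)
      _ = (1/lam) * ∑ i ∈ S, ‖g i‖ ^ 2 := by ring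
  have main : (∑ i ∈ S, f' i xnext) - (∑ i ∈ S, f' i xstar)
        + (s' * (lam+μ)/2) * ‖xstar - vnext‖ ^ 2
      ≤ (s' * lam/2) * ‖xstar - vr‖ ^ 2
        - ((lam - δs)/2) * (∑ i ∈ S, ‖xi i - vr‖ ^ 2)
        + (1/lam) * ∑ i ∈ S, ‖g i‖ ^ 2 := by linarith [KEY, h6]
  exact mul_le_mul_of_nonneg_left main (by positivity)
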